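/- arXiv:1301.4446 — 3 statements merged into one kernel-verified Lean document; each statement's English description precedes it below -/
import Mathlib

section
/- (Baumslag) Let G be a finitely generated residually finite group. Then Aut(G) is residually finite. -/
/-- A group is residually finite if every nontrivial element survives in some finite quotient. -/
def ResiduallyFinite (G : Type*) [Group G] : Prop :=
  ∀ g : G, g ≠ 1 → ∃ (F : Type) (_ : Group F) (_ : Finite F) (φ : G →* F), φ g ≠ 1

/-- A group is residually `p` if every nontrivial element survives in some finite `p`-group
quotient. -/
def ResiduallyP (p : ℕ) (G : Type*) [Group G] : Prop :=
  ∀ g : G, g ≠ 1 →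
    ∃ (F : Type) (_ : Group F) (_ : Finite F) (φ : G →* F), IsPGroup p F ∧ φ g ≠ 1

/-- A group is virtually residually `p` if some finite-index subgroup is residually `p`. -/
def VirtuallyResiduallyP (p : ℕ) (G : Type*) [Group G] : Prop :=
  ∃ K : Subgroup G, K.FiniteIndex ∧ ResiduallyP p ↥K

/-- Finitely many homomorphisms from a finitely generated group to a finite group. -/
lemma finite_homs (G : Type*) [Group G] (hfg : Group.FG G) (F : Type) [Group F] [Finite F] :
    Finite (G →* F) := by
  obtain ⟨S, hS, hSfin⟩ := Group.fg_iff.mp hfg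
  have : Finite S := hSfin
  refine Finite.of_injective (fun f : G →* F => (fun s : S => f s)) ?_
  intro f g h
  refine MonoidHom.eq_of_eqOn_dense hS ?_
  intro x hx
  exact congrFun h ⟨x, hx⟩

/-- **Baumslag.** The automorphism group of a finitely generated residually finite
group is residually finite. -/
theorem statement5 (G : Type*) [Group G] (hfg : Group.FG G) (hrf : ResiduallyFinite G) :
    ResiduallyFinite (MulAut G) := by
  intro α hα
  have hg : ∃ g : G, α g ≠ g := by
    by_contra h
    push_neg at h
    exact hα (MulEquiv.ext fun x => h x)
  obtain ⟨g, hg⟩ := hg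
  have hne : α g * g⁻¹ ≠ 1 := by
    intro h
    exact hg (by rwa [mul_inv_eq_one] at h)
  obtain ⟨F, _, _, φ, hφ⟩ := hrf _ hne
  have hfinF : Finite (G →* F) := finite_homs G hfg F
  set M : Subgroup G := ⨅ f : G →* F, f.ker with hMdef
  have hMle : ∀ f : G →* F, M ≤ f.ker := fun f => iInf_le _ f
  have hMmem : ∀ x : G, x ∈ M ↔ ∀ f : G →* F, f x = 1 := by
    intro x
    simp [hMdef, Subgroup.mem_iInf, MonoidHom.mem_ker]
  have hMnormal : M.Normal := by
    constructor
    intro n hn x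
    rw [hMmem] at hn ⊢
    intro f
    simp [hn f]
  have hMfi : M.FiniteIndex := by
    refine Subgroup.finiteIndex_iInf fun f => ?_
    have : Finite (G ⧸ f.ker) := Finite.of_equiv _ (QuotientGroup.quotientKerEquivRange f).symm.toEquiv
    exact ⟨Subgroup.index_ne_zero_of_finite⟩
  have hmap_le : ∀ β : MulAut G, M.map β.toMonoidHom ≤ M := by
    intro β x hx
    rw [Subgroup.mem_map] at hx
    obtain ⟨y, hy, rfl⟩ := hx
    rw [hMmem] at hy ⊢
    intro f
    exact hy (f.comp β.toMonoidHom)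
  have hmap : ∀ β : MulAut G, M.map (β : G ≃* G).toMonoidHom = M := by
    intro β
    refine le_antisymm (hmap_le β) ?_
    intro x hx
    refine ⟨β⁻¹ x, ?_, ?_⟩
    · exact hmap_le β⁻¹ ⟨x, hx, rfl⟩
    · simp
  have hfinQ : Finite (G ⧸ M) := M.finite_quotient_of_finiteIndex
  obtain ⟨k, ⟨e⟩⟩ := Finite.exists_equiv_fin (G ⧸ M)
  -- the homomorphism MulAut G →* Perm (Fin k)
  refine ⟨Equiv.Perm (Fin k), inferInstance, inferInstance, ?_, ?_⟩
  · refine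
      { toFun := fun β => e.permCongr ((QuotientGroup.congr M M (β : G ≃* G) (hmap β)).toEquiv)
        map_one' := ?_
        map_mul' := ?_ }
    · ext x
      obtain ⟨a, ha⟩ := QuotientGroup.mk_surjective (e.symm x)
      have l1 : (QuotientGroup.congr M M ((1 : MulAut G) : G ≃* G) (hmap 1)).toEquiv
          ((a : G ⧸ M)) = ((a : G) : G ⧸ M) := rfl
      rw [Equiv.permCongr_apply, ← ha, l1, ha, Equiv.apply_symm_apply]
      rfl
    · intro β γ
      ext x
      obtain ⟨a, ha⟩ := QuotientGroup.mk_surjective (e.symm x)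
      have l1 : ∀ (δ : MulAut G) (b : G), (QuotientGroup.congr M M (δ : G ≃* G) (hmap δ)).toEquiv
          ((b : G ⧸ M)) = ((δ b : G) : G ⧸ M) := fun _ _ => rfl
      simp only [Equiv.permCongr_apply, Equiv.Perm.mul_apply, ← ha, Equiv.symm_apply_apply, l1]
      rfl
  · intro h
    have h1 : e.permCongr ((QuotientGroup.congr M M (α : G ≃* G) (hmap α)).toEquiv)
        (e ((g : G ⧸ M))) = e ((g : G ⧸ M)) := by
      rw [show e.permCongr ((QuotientGroup.congr M M (α : G ≃* G) (hmap α)).toEquiv) = 1 from h]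
      rfl
    rw [Equiv.permCongr_apply, Equiv.symm_apply_apply] at h1
    have h2 : ((α g : G) : G ⧸ M) = ((g : G) : G ⧸ M) := by
      have := e.injective h1
      exact this
    rw [QuotientGroup.eq] at h2
    -- (α g)⁻¹ * g ∈ M
    have h3 : g⁻¹ * (α g) ∈ M := M.inv_mem_iff.mp (by simpa using h2)
    have h4 : g * (g⁻¹ * α g) * g⁻¹ ∈ M := hMnormal.conj_mem _ h3 g
    rw [hMmem] at h4
    apply hφ
    have := h4 φ
    simpa [mul_assoc] using this
end

section
/- Let G be a group and H ≤ G a subgroup. Then H is an Aut-splitting subgroup of G if and only if the following three conditions hold: (1) the center Z(G) has finite index in the centralizer C_G(H); (2) there exists a finite-index subgroup A ≤ Aut(G) such that every α ∈ A maps H onto a conjugate of H; (3) Out_{H̲}(G) has finite index in Out_H(G). -/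
section Defs

variable (G : Type*) [Group G]

/-- The subgroup of inner automorphisms of `G`. -/
def Inn : Subgroup (MulAut G) := (MulAut.conj : G →* MulAut G).range

instance Inn.normal : (Inn G).Normal := by
  constructor
  intro n hn φ
  obtain ⟨g, rfl⟩ := hn
  refine ⟨φ g, ?_⟩
  ext x
  simp only [MulAut.conj_apply, MulAut.mul_apply, map_mul, map_inv, MulAut.inv_def,
    MulEquiv.apply_symm_apply]

/-- The outer automorphism group `Out(G) = Aut(G)/Inn(G)`. -/
def Out := MulAut G ⧸ Inn G

instance : Group (Out G) := inferInstanceAs (Group (MulAut G ⧸ Inn G))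

/-- The canonical projection `Aut(G) → Out(G)`. -/
def outProj : MulAut G →* Out G := QuotientGroup.mk' (Inn G)

/-- A surjective homomorphism `f : A → B` splits virtually if it admits a section on some
finite-index subgroup of `B`. -/
def SplitsVirtually {A B : Type*} [Group A] [Group B] (f : A →* B) : Prop :=
  ∃ B' : Subgroup B, B'.FiniteIndex ∧ ∃ s : (↥B') →* A, ∀ x : B', f (s x) = (x : B)

/-- `Aut_{H̲}(G)`: the subgroup of automorphisms of `G` fixing `H` pointwise. -/
def autFix (H : Subgroup G) : Subgroup (MulAut G) where
  carrier := {φ | ∀ h ∈ H, φ h = h}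
  one_mem' := fun _ _ => rfl
  mul_mem' := by
    intro a b ha hb h hh
    show a (b h) = h
    rw [hb h hh, ha h hh]
  inv_mem' := by
    intro a ha h hh
    show a⁻¹ h = h
    calc a⁻¹ h = a⁻¹ (a h) := by rw [ha h hh]
    _ = h := by rw [MulAut.inv_def]; exact a.symm_apply_apply h

/-- `Aut_H(G)`: the subgroup of automorphisms of `G` mapping `H` onto itself. -/
def autSetwise (H : Subgroup G) : Subgroup (MulAut G) where
  carrier := {φ | ∀ g : G, φ g ∈ H ↔ g ∈ H}
  one_mem' := fun _ => Iff.rfl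
  mul_mem' := by
    intro a b ha hb g
    show a (b g) ∈ H ↔ g ∈ H
    rw [ha, hb]
  inv_mem' := by
    intro a ha g
    show a⁻¹ g ∈ H ↔ g ∈ H
    have h1 : a (a⁻¹ g) = g := by rw [MulAut.inv_def]; exact a.apply_symm_apply g
    have := ha (a⁻¹ g)
    rw [h1] at this
    exact this.symm

theorem mem_autSetwise {H : Subgroup G} {φ : MulAut G} :
    φ ∈ autSetwise G H ↔ ∀ g : G, φ g ∈ H ↔ g ∈ H := Iff.rfl

/-- `H` is an Aut-splitting subgroup of `G` if the restriction of `Aut(G) → Out(G)` to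
`Aut_{H̲}(G)` has finite kernel and an image of finite index in `Out(G)`. -/
def IsAutSplitting (H : Subgroup G) : Prop :=
  Finite ((outProj G).comp (autFix G H).subtype).ker ∧
    ((autFix G H).map (outProj G)).FiniteIndex

/-- The conjugate `gKg⁻¹` of a subgroup. -/
def conjSubgroup (g : G) (K : Subgroup G) : Subgroup G :=
  K.map (MulAut.conj g).toMonoidHom

end Defs

section AuxProof

variable (G : Type*) [Group G] (H : Subgroup G)

lemma outProj_surjective : Function.Surjective (outProj G) :=
  QuotientGroup.mk'_surjective _

lemma outProj_eq_one_iff (φ : MulAut G) : outProj G φ = 1 ↔ φ ∈ Inn G :=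
  QuotientGroup.eq_one_iff φ

lemma outProj_conj (g : G) : outProj G (MulAut.conj g) = 1 :=
  (outProj_eq_one_iff G _).mpr ⟨g, rfl⟩

lemma autFix_le_autSetwise : autFix G H ≤ autSetwise G H := by
  intro φ hφ
  intro g
  constructor
  · intro hg
    have h2 : (φ⁻¹ : MulAut G) ∈ autFix G H := (autFix G H).inv_mem hφ
    have h3 := h2 (φ g) hg
    have hg' : (φ⁻¹ : MulAut G) (φ g) = g := by
      rw [MulAut.inv_def]; exact φ.symm_apply_apply g
    rw [hg'] at h3
    rw [h3]; exact hg
  · intro hg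
    have := hφ g hg
    rw [this]; exact hg

lemma map_mul_conj_eq {β : MulAut G} (hβ : β ∈ autSetwise G H) (g : G) :
    H.map (β * MulAut.conj g).toMonoidHom = conjSubgroup G (β g) H := by
  ext x
  simp only [Subgroup.mem_map, conjSubgroup, MulEquiv.coe_toMonoidHom, MulAut.conj_apply]
  constructor
  · rintro ⟨h, hh, rfl⟩
    refine ⟨β h, (hβ h).mpr hh, ?_⟩
    rw [MulAut.mul_apply, MulAut.conj_apply, map_mul, map_mul, map_inv]
  · rintro ⟨h, hh, rfl⟩
    have hmem : β.symm h ∈ H := by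
      have := hβ (β.symm h)
      rw [β.apply_symm_apply] at this
      exact this.mp hh
    refine ⟨β.symm h, hmem, ?_⟩
    rw [MulAut.mul_apply, MulAut.conj_apply, map_mul, map_mul, map_inv,
      β.apply_symm_apply]

/-- Part (1): the kernel condition is equivalent to `Z(G)` having finite index in `C_G(H)`. -/
lemma part1_iff : Finite ((outProj G).comp (autFix G H).subtype).ker ↔
    (Subgroup.center G).relIndex (Subgroup.centralizer (H : Set G)) ≠ 0 := by
  set C := Subgroup.centralizer (H : Set G) with hC
  set K := ((outProj G).comp (autFix G H).subtype).ker with hK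
  have hconj : ∀ g : C, MulAut.conj (g : G) ∈ autFix G H := by
    rintro g h hh
    have hc := Subgroup.mem_centralizer_iff.mp g.2 h hh
    rw [MulAut.conj_apply, mul_inv_eq_iff_eq_mul, ← hc]
  let φ₀ : C →* (autFix G H) :=
    ((MulAut.conj : G →* MulAut G).comp C.subtype).codRestrict (autFix G H) (fun g => hconj g)
  have hφ₀ : ∀ g : C, ((φ₀ g : (autFix G H)) : MulAut G) = MulAut.conj (g : G) := fun g => rfl
  let ψ : C →* K := φ₀.codRestrict K (by
    intro g
    show ((outProj G).comp (autFix G H).subtype) (φ₀ g) = 1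
    show outProj G ((φ₀ g : (autFix G H)) : MulAut G) = 1
    rw [hφ₀]
    exact outProj_conj G _)
  have hψval : ∀ g : C, (((ψ g : K) : (autFix G H)) : MulAut G) = MulAut.conj (g : G) :=
    fun g => rfl
  have hsurj : Function.Surjective ψ := by
    rintro ⟨⟨φ, hφ⟩, hk⟩
    have hk' : outProj G φ = 1 := hk
    rw [outProj_eq_one_iff] at hk'
    obtain ⟨g, rfl⟩ := hk'
    have hg : g ∈ C := by
      rw [hC, Subgroup.mem_centralizer_iff]
      intro h hh
      have := hφ h hh
      rw [MulAut.conj_apply, mul_inv_eq_iff_eq_mul] at this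
      exact this.symm
    exact ⟨⟨g, hg⟩, Subtype.ext (Subtype.ext rfl)⟩
  have hkeq : ψ.ker = (Subgroup.center G).subgroupOf C := by
    ext g
    rw [MonoidHom.mem_ker, Subgroup.mem_subgroupOf]
    constructor
    · intro h1
      have h2 : MulAut.conj (g : G) = 1 := by
        rw [← hψval g, h1]; rfl
      rw [Subgroup.mem_center_iff]
      intro x
      have h3 : MulAut.conj (g : G) x = x := by rw [h2]; rfl
      rw [MulAut.conj_apply, mul_inv_eq_iff_eq_mul] at h3
      exact h3.symm
    · intro h1
      have h2 : MulAut.conj (g : G) = 1 := by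
        ext x
        rw [MulAut.conj_apply, mul_inv_eq_iff_eq_mul]
        show _ = x * (g : G)
        exact (Subgroup.mem_center_iff.mp h1 x).symm
      apply Subtype.ext
      apply Subtype.ext
      rw [hψval g, h2]; rfl
  have e := QuotientGroup.quotientKerEquivOfSurjective ψ hsurj
  have hcard : (Subgroup.center G).relIndex C = Nat.card K := by
    rw [Subgroup.relIndex, ← hkeq, Subgroup.index_eq_card, Nat.card_congr e.toEquiv]
  rw [hcard]
  rw [Nat.card_ne_zero]
  constructor
  · intro hfin
    exact ⟨⟨1⟩, hfin⟩
  · intro ⟨_, hfin⟩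
    exact hfin

/-- Part (2): the image of `autSetwise` has finite index in `Out G` iff a finite-index
subgroup of `Aut G` maps `H` onto conjugates of `H`. -/
lemma part2_iff : ((autSetwise G H).map (outProj G)).FiniteIndex ↔
    (∃ A : Subgroup (MulAut G), A.FiniteIndex ∧
      ∀ α ∈ A, ∃ g : G, H.map (MulEquiv.toMonoidHom α) = conjSubgroup G g H) := by
  set S := (autSetwise G H).map (outProj G) with hS
  have hcomap : (S.comap (outProj G)).index = S.index :=
    Subgroup.index_comap_of_surjective S (outProj_surjective G)
  constructor
  · intro hfin
    refine ⟨S.comap (outProj G), ⟨by rw [hcomap]; exact hfin.index_ne_zero⟩, ?_⟩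
    intro α hα
    rw [Subgroup.mem_comap] at hα
    obtain ⟨β, hβ, hβα⟩ := hα
    have h1 : outProj G (β⁻¹ * α) = 1 := by
      rw [map_mul, map_inv, hβα, inv_mul_cancel]
    rw [outProj_eq_one_iff] at h1
    obtain ⟨g, hg⟩ := h1
    have hαeq : α = β * MulAut.conj g := by
      rw [hg, mul_inv_cancel_left]
    refine ⟨β g, ?_⟩
    rw [hαeq]
    exact map_mul_conj_eq G H hβ g
  · rintro ⟨A, hA, hprop⟩
    have hle : A ≤ S.comap (outProj G) := by
      intro α hα
      obtain ⟨g, hg⟩ := hprop α hα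
      rw [Subgroup.mem_comap]
      set β := (MulAut.conj g)⁻¹ * α with hβdef
      have hαeq : α = MulAut.conj g * β := by rw [hβdef, mul_inv_cancel_left]
      have hβmem : β ∈ autSetwise G H := by
        intro x
        constructor
        · intro hx
          -- β x ∈ H → g * (β x) * g⁻¹ = α x ∈ conjSubgroup g H = H.map α → x ∈ H
          have h2 : α x ∈ conjSubgroup G g H := by
            refine ⟨β x, hx, ?_⟩
            show MulAut.conj g (β x) = α x
            rw [← MulAut.mul_apply, ← hαeq]
          rw [← hg] at h2
          obtain ⟨y, hy, hyx⟩ := h2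
          have : y = x := α.injective hyx
          rw [← this]; exact hy
        · intro hx
          have h2 : α x ∈ conjSubgroup G g H := by
            rw [← hg]
            exact ⟨x, hx, rfl⟩
          obtain ⟨y, hy, hyx⟩ := h2
          have : MulAut.conj g y = α x := hyx
          have h3 : β x = y := by
            rw [hβdef]
            rw [MulAut.mul_apply, ← this, ← MulAut.mul_apply, inv_mul_cancel]
            rfl
          rw [h3]; exact hy
      have : outProj G α ∈ S := by
        have h4 : outProj G α = outProj G β := by
          rw [hαeq, map_mul, outProj_conj, one_mul]
        rw [h4]
        exact ⟨β, hβmem, rfl⟩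
      exact this
    haveI := hA
    haveI : (S.comap (outProj G)).FiniteIndex := Subgroup.finiteIndex_of_le hle
    exact ⟨by rw [← hcomap]; exact this.index_ne_zero⟩

end AuxProof

/-- `H` is an Aut-splitting subgroup of `G` iff (1) `Z(G)` has finite index
in `C_G(H)`, (2) a finite-index subgroup of `Aut(G)` maps `H` onto conjugates of `H`, and
(3) `Out_{H̲}(G)` has finite index in `Out_H(G)`. -/
theorem statement11 (G : Type*) [Group G] (H : Subgroup G) :
    IsAutSplitting G H ↔
      ((Subgroup.center G).relIndex (Subgroup.centralizer (H : Set G)) ≠ 0 ∧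
      (∃ A : Subgroup (MulAut G), A.FiniteIndex ∧
        ∀ α ∈ A, ∃ g : G, H.map (MulEquiv.toMonoidHom α) = conjSubgroup G g H) ∧
      ((autFix G H).map (outProj G)).relIndex ((autSetwise G H).map (outProj G)) ≠ 0) := by
  rw [IsAutSplitting, part1_iff]
  have hle : (autFix G H).map (outProj G) ≤ (autSetwise G H).map (outProj G) :=
    Subgroup.map_mono (autFix_le_autSetwise G H)
  have hmul := Subgroup.relIndex_mul_index hle
  constructor
  · rintro ⟨h1, h2⟩
    refine ⟨h1, ?_, ?_⟩
    · rw [← part2_iff]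
      exact Subgroup.finiteIndex_of_le hle
    · intro hzero
      rw [hzero, zero_mul] at hmul
      exact h2.index_ne_zero hmul.symm
  · rintro ⟨h1, h2, h3⟩
    refine ⟨h1, ?_⟩
    rw [← part2_iff] at h2
    constructor
    rw [← hmul]
    exact mul_ne_zero h3 h2.index_ne_zero
end

section
/- Let G be a group and H ≤ G a subgroup such that Out(H) is finite. Then Out_{H̲}(G) has finite index in Out_H(G); in fact the index [Out_H(G) : Out_{H̲}(G)] is at most the order of Out(H). -/
section Aux

variable {G : Type*} [Group G] {H : Subgroup G}

/-- Restriction of a setwise-`H`-preserving automorphism of `G` to an automorphism of `H`. -/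
def restrictAut (φ : MulAut G) (hφ : φ ∈ autSetwise G H) : MulAut ↥H where
  toFun h := ⟨φ h, (hφ h).mpr h.2⟩
  invFun h := ⟨φ⁻¹ h, ((autSetwise G H).inv_mem hφ h).mpr h.2⟩
  left_inv h := Subtype.ext (by simp [MulAut.inv_def])
  right_inv h := Subtype.ext (by simp [MulAut.inv_def])
  map_mul' a b := Subtype.ext (map_mul φ (a : G) (b : G))

theorem key_lemma (φ ψ : MulAut G) (hφ : φ ∈ autSetwise G H) (hψ : ψ ∈ autSetwise G H)
    (heq : outProj ↥H (restrictAut φ hφ) = outProj ↥H (restrictAut ψ hψ)) :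
    (outProj G ψ)⁻¹ * outProj G φ ∈ (autFix G H).map (outProj G) := by
  replace heq : (QuotientGroup.mk' (Inn ↥H)) (restrictAut φ hφ)
      = (QuotientGroup.mk' (Inn ↥H)) (restrictAut ψ hψ) := heq
  rw [QuotientGroup.mk'_eq_mk'] at heq
  obtain ⟨n, ⟨h, rfl⟩, hn⟩ := heq
  refine ⟨ψ⁻¹ * φ * MulAut.conj ((h : ↥H) : G), ?_, ?_⟩
  · intro x hx
    have h1 := congrArg (fun (e : MulAut ↥H) => ((e ⟨x, hx⟩ : ↥H) : G)) hn
    simp only [MulAut.mul_apply, MulAut.conj_apply] at h1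
    have h2 : ((restrictAut φ hφ) (h * ⟨x, hx⟩ * h⁻¹) : G)
        = φ ((h : G) * x * (h : G)⁻¹) := rfl
    have h3 : ((restrictAut ψ hψ) ⟨x, hx⟩ : G) = ψ x := rfl
    rw [h2, h3] at h1
    show (ψ⁻¹ * φ * MulAut.conj ((h : ↥H) : G)) x = x
    simp only [MulAut.mul_apply, MulAut.conj_apply]
    rw [h1]
    simp [MulAut.inv_def]
  · have hc : outProj G (MulAut.conj ((h : ↥H) : G)) = 1 :=
      (QuotientGroup.eq_one_iff _).mpr ⟨((h : ↥H) : G), rfl⟩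
    rw [map_mul, map_mul, hc, mul_one, map_inv]

end Aux

/-- If `Out(H)` is finite, then `Out_{H̲}(G)` has finite index in `Out_H(G)`,
and the index is at most the order of `Out(H)`. -/
theorem statement13 (G : Type*) [Group G] (H : Subgroup G) (hout : Finite (Out ↥H)) :
    ((autFix G H).map (outProj G)).relIndex ((autSetwise G H).map (outProj G)) ≠ 0 ∧
      ((autFix G H).map (outProj G)).relIndex ((autSetwise G H).map (outProj G)) ≤
        Nat.card (Out ↥H) := by
  classical
  set A := (autFix G H).map (outProj G) with hA
  set B := (autSetwise G H).map (outProj G) with hB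
  have lift : ∀ b : B, ∃ φ : MulAut G, φ ∈ autSetwise G H ∧ outProj G φ = b := fun b => b.2
  choose φf hφf1 hφf2 using lift
  let f : (B ⧸ (A.subgroupOf B)) → Out ↥H := fun q =>
    outProj ↥H (restrictAut (φf q.out) (hφf1 q.out))
  have hinj : Function.Injective f := by
    intro q₁ q₂ hq
    have hmem := key_lemma (φf q₁.out) (φf q₂.out) (hφf1 q₁.out) (hφf1 q₂.out) hq
    rw [hφf2 q₂.out, hφf2 q₁.out] at hmem
    have hmem' : (q₂.out)⁻¹ * q₁.out ∈ A.subgroupOf B := by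
      rw [Subgroup.mem_subgroupOf]
      exact hmem
    have : (QuotientGroup.mk q₂.out : B ⧸ (A.subgroupOf B)) = QuotientGroup.mk q₁.out :=
      (QuotientGroup.eq).mpr hmem'
    rw [QuotientGroup.out_eq', QuotientGroup.out_eq'] at this
    exact this.symm
  have hfin : Finite (B ⧸ (A.subgroupOf B)) := Finite.of_injective f hinj
  have hcard : A.relIndex B = Nat.card (B ⧸ (A.subgroupOf B)) := rfl
  constructor
  · rw [hcard]
    exact Nat.card_ne_zero.mpr ⟨⟨QuotientGroup.mk 1⟩, hfin⟩
  · rw [hcard]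
    exact Nat.card_le_card_of_injective f hinj
end
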